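/- Assume a(s)/e^{2γs} → a_∞ and f(s)/e^{2βs} → f_∞ as s → +∞ with γ, β, a_∞, f_∞ > 0. Then the Keller–Osserman condition (existence of r with f(r) > 0, f ≥ 0 on (r,∞), and ∫_{g⁻¹(r)}^{+∞} ds/√(F(g(s))) < ∞ with F(t) = ∫_r^t f) holds if β > γ, and fails (the integral diverges for every admissible r) if β < γ. -/

import Mathlib

open Filter Topology MeasureTheory

private lemma aux_subst (a f g ginv : ℝ → ℝ) (ν : ℝ) (hν : 0 < ν)
    (hab : ∀ s, ν ≤ a s)
    (hg : ∀ s, HasDerivAt g (1 / Real.sqrt (a (g s))) s)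
    (hinv1 : ∀ s, ginv (g s) = s) (hinv2 : ∀ t, g (ginv t) = t) (r : ℝ) :
    IntegrableOn (fun s => 1 / Real.sqrt (∫ τ in r..(g s), f τ)) (Set.Ici (ginv r)) ↔
    IntegrableOn (fun t => Real.sqrt (a t) * (1 / Real.sqrt (∫ τ in r..t, f τ))) (Set.Ici r) := by
  have hapos : ∀ t, 0 < a t := fun t => lt_of_lt_of_le hν (hab t)
  have hsq : ∀ t, 0 < Real.sqrt (a t) := fun t => Real.sqrt_pos.mpr (hapos t)
  -- ginv strict mono
  have hgsurj : Function.Surjective g := fun t => ⟨ginv t, hinv2 t⟩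
  have hgmono : StrictMono g := by
    apply strictMono_of_deriv_pos
    intro x
    rw [(hg x).deriv]
    exact one_div_pos.mpr (hsq _)
  have hginvmono : StrictMono ginv := by
    intro t1 t2 h
    by_contra hc
    push_neg at hc
    have := hgmono.monotone hc
    rw [hinv2, hinv2] at this
    exact absurd h (not_lt.mpr this)
  have hginvsurj : Function.Surjective ginv := fun s => ⟨g s, hinv1 s⟩
  have hginvcont : Continuous ginv := hginvmono.monotone.continuous_of_surjective hginvsurj
  have hginvderiv : ∀ t, HasDerivAt ginv (Real.sqrt (a t)) t := by
    intro t
    have h1 : HasDerivAt g (1 / Real.sqrt (a t)) (ginv t) := by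
      have := hg (ginv t); rwa [hinv2] at this
    have h2 := HasDerivAt.of_local_left_inverse (hginvcont.continuousAt) h1
      (one_div_pos.mpr (hsq t)).ne' (Filter.Eventually.of_forall hinv2)
    rwa [one_div, inv_inv] at h2
  -- image
  have e := StrictMono.orderIsoOfSurjective ginv hginvmono hginvsurj
  have himg : ginv '' Set.Ici r = Set.Ici (ginv r) := by
    have : ginv = ⇑(StrictMono.orderIsoOfSurjective ginv hginvmono hginvsurj) :=
      (StrictMono.coe_orderIsoOfSurjective ginv hginvmono hginvsurj).symm
    rw [this, OrderIso.image_Ici]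
  rw [← himg]
  rw [MeasureTheory.integrableOn_image_iff_integrableOn_abs_deriv_smul measurableSet_Ici
    (fun x _hx => (hginvderiv x).hasDerivWithinAt) (hginvmono.injective.injOn)]
  apply integrableOn_congr_fun _ measurableSet_Ici
  intro x _
  simp [hinv2, abs_of_nonneg (Real.sqrt_nonneg (a x)), smul_eq_mul]

private lemma aux_pos (f : ℝ → ℝ) (hfc : Continuous f) (r : ℝ) (hfr : 0 < f r)
    (hfnn : ∀ s, r < s → 0 ≤ f s) :
    ∀ t, r < t → 0 < ∫ τ in r..t, f τ := by
  intro t ht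
  have hev : ∀ᶠ x in 𝓝 r, f r / 2 < f x :=
    (hfc.continuousAt (x := r)).eventually (eventually_gt_nhds (by linarith))
  obtain ⟨δ, hδ, hδ2⟩ := Metric.eventually_nhds_iff.mp hev
  set u := min t (r + δ/2) with hu
  have hru : r < u := lt_min ht (by linarith)
  have hut : u ≤ t := min_le_left _ _
  have hint : ∀ a b : ℝ, IntervalIntegrable f volume a b := fun a b => hfc.intervalIntegrable a b
  have hsplit : (∫ τ in r..u, f τ) + (∫ τ in u..t, f τ) = ∫ τ in r..t, f τ :=
    intervalIntegral.integral_add_adjacent_intervals (hint r u) (hint u t)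
  have h1 : f r / 2 * (u - r) ≤ ∫ τ in r..u, f τ := by
    have := intervalIntegral.integral_mono_on hru.le
      (intervalIntegrable_const (c := f r / 2)) (hint r u) (fun x hx => by
        apply le_of_lt
        apply hδ2
        have hx2 : x ≤ r + δ/2 := le_trans hx.2 (min_le_right _ _)
        rw [Real.dist_eq, abs_of_nonneg (by linarith [hx.1])]
        linarith)
    rw [intervalIntegral.integral_const, smul_eq_mul] at this
    linarith
  have h2 : 0 ≤ ∫ τ in u..t, f τ :=
    intervalIntegral.integral_nonneg hut (fun x hx => hfnn x (lt_of_lt_of_le hru hx.1))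
  nlinarith [h1, h2, hsplit]

private lemma aux_div2 (a f : ℝ → ℝ) (hfc : Continuous f)
    (γ β aInf fInf : ℝ) (hβ : 0 < β) (hγβ : β < γ)
    (haInf : 0 < aInf) (hfInf : 0 < fInf)
    (r : ℝ) (hfr : 0 < f r) (hfnn : ∀ s, r < s → 0 ≤ f s)
    (hFpos : ∀ t, r < t → 0 < ∫ τ in r..t, f τ)
    (R : ℝ) (hRr : r + 1 ≤ R)
    (haR : ∀ t, R ≤ t → aInf/2 * Real.exp (2*γ*t) ≤ a t)
    (hfR : ∀ t, R ≤ t → f t ≤ 2 * fInf * Real.exp (2*β*t)) :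
    ¬ IntegrableOn (fun t => Real.sqrt (a t) * (1 / Real.sqrt (∫ τ in r..t, f τ))) (Set.Ici r) := by
  intro hI
  set F : ℝ → ℝ := fun t => ∫ τ in r..t, f τ with hF
  have hint : ∀ u v : ℝ, IntervalIntegrable f volume u v := fun u v => hfc.intervalIntegrable u v
  have hexpint : ∀ u v : ℝ, ∫ τ in u..v, Real.exp (2*β*τ)
      = (Real.exp (2*β*v) - Real.exp (2*β*u))/(2*β) := by
    intro u v
    have hD : ∀ τ ∈ Set.uIcc u v,
        HasDerivAt (fun τ => Real.exp (2*β*τ)/(2*β)) (Real.exp (2*β*τ)) τ := by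
      intro τ _
      have h1 : HasDerivAt (fun τ : ℝ => 2*β*τ) (2*β) τ := by
        simpa using (hasDerivAt_id τ).const_mul (2*β)
      have h2 := (h1.exp).div_const (2*β)
      rw [mul_div_assoc, div_self (by positivity : (2*β) ≠ 0), mul_one] at h2
      exact h2
    rw [intervalIntegral.integral_eq_sub_of_hasDerivAt hD
      ((Real.continuous_exp.comp (continuous_const.mul continuous_id)).intervalIntegrable u v)]
    ring
  -- F R ≥ 0
  have hFR0 : 0 ≤ F R := intervalIntegral.integral_nonneg (by linarith)
    (fun x hx => by rcases eq_or_lt_of_le hx.1 with h|h; · rw [← h]; exact hfr.le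
                    · exact hfnn x h)
  set C : ℝ := F R * Real.exp (-(2*β*R)) + fInf/β with hC
  have hCpos : 0 < C := by positivity
  -- F t ≤ C e^{2βt} for t ≥ R
  have hFub : ∀ t, R ≤ t → F t ≤ C * Real.exp (2*β*t) := by
    intro t ht
    have hsplit : F R + (∫ τ in R..t, f τ) = F t :=
      intervalIntegral.integral_add_adjacent_intervals (hint r R) (hint R t)
    have h1 : (∫ τ in R..t, f τ) ≤ ∫ τ in R..t, 2 * fInf * Real.exp (2*β*τ) :=
      intervalIntegral.integral_mono_on ht (hint R t)
        ((continuous_const.mul (Real.continuous_exp.comp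
          (continuous_const.mul continuous_id))).intervalIntegrable R t)
        (fun x hx => hfR x hx.1)
    have h2 : (∫ τ in R..t, 2 * fInf * Real.exp (2*β*τ))
        = 2 * fInf * ((Real.exp (2*β*t) - Real.exp (2*β*R))/(2*β)) := by
      rw [intervalIntegral.integral_const_mul, hexpint]
    have h3 : 2 * fInf * ((Real.exp (2*β*t) - Real.exp (2*β*R))/(2*β)) ≤ fInf/β * Real.exp (2*β*t) := by
      have h0 : 2 * fInf * ((Real.exp (2*β*t) - Real.exp (2*β*R))/(2*β))
          = fInf/β * Real.exp (2*β*t) - fInf/β * Real.exp (2*β*R) := by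
        field_simp
      have h1' : 0 ≤ fInf/β * Real.exp (2*β*R) := by positivity
      linarith
    have h4 : F R ≤ F R * Real.exp (-(2*β*R)) * Real.exp (2*β*t) := by
      rw [mul_assoc, ← Real.exp_add]
      nlinarith [Real.one_le_exp (by nlinarith : (0:ℝ) ≤ -(2*β*R) + 2*β*t)]
    calc F t = F R + ∫ τ in R..t, f τ := hsplit.symm
    _ ≤ F R * Real.exp (-(2*β*R)) * Real.exp (2*β*t) + fInf/β * Real.exp (2*β*t) := by
        have := le_trans h1 (le_of_eq h2)
        linarith [le_trans this h3]
    _ = C * Real.exp (2*β*t) := by ring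
  -- pointwise lower bound on Ici R
  set c : ℝ := Real.sqrt (aInf/2/C * Real.exp (2*(γ-β)*R)) with hc
  have hcpos : 0 < c := Real.sqrt_pos.mpr (by positivity)
  have hlb : ∀ t, R ≤ t → c ≤ Real.sqrt (a t) * (1 / Real.sqrt (F t)) := by
    intro t ht
    have hFt : 0 < F t := hFpos t (by linarith)
    have h1 : Real.sqrt (aInf/2 * Real.exp (2*γ*t)) ≤ Real.sqrt (a t) :=
      Real.sqrt_le_sqrt (haR t ht)
    have h2 : Real.sqrt (F t) ≤ Real.sqrt (C * Real.exp (2*β*t)) :=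
      Real.sqrt_le_sqrt (hFub t ht)
    have h3 : 1 / Real.sqrt (C * Real.exp (2*β*t)) ≤ 1 / Real.sqrt (F t) :=
      one_div_le_one_div_of_le (Real.sqrt_pos.mpr hFt) h2
    have h5 : Real.sqrt (aInf/2 * Real.exp (2*γ*t)) * (1 / Real.sqrt (C * Real.exp (2*β*t)))
        ≤ Real.sqrt (a t) * (1 / Real.sqrt (F t)) := by
      apply mul_le_mul h1 h3 (by positivity) (Real.sqrt_nonneg _)
    refine le_trans ?_ h5
    rw [one_div, ← Real.sqrt_inv, ← Real.sqrt_mul (by positivity)]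
    apply Real.sqrt_le_sqrt
    have hexpmono : Real.exp (2*(γ-β)*R) ≤ Real.exp (2*(γ-β)*t) :=
      Real.exp_le_exp.mpr (by nlinarith)
    have hring : aInf / 2 * Real.exp (2*γ*t) * (C * Real.exp (2*β*t))⁻¹
        = aInf/2/C * Real.exp (2*(γ-β)*t) := by
      rw [mul_inv, ← Real.exp_neg,
        show aInf / 2 * Real.exp (2*γ*t) * (C⁻¹ * Real.exp (-(2*β*t)))
          = aInf/2/C * (Real.exp (2*γ*t) * Real.exp (-(2*β*t))) from by ring,
        ← Real.exp_add]
      ring_nf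
    rw [hring]
    exact mul_le_mul_of_nonneg_left hexpmono (by positivity)
  -- contradiction with const integrable on infinite set
  have hIR : IntegrableOn (fun t => Real.sqrt (a t) * (1 / Real.sqrt (F t))) (Set.Ici R) :=
    hI.mono_set (Set.Ici_subset_Ici.mpr (by linarith))
  have hconst : IntegrableOn (fun _ : ℝ => c) (Set.Ici R) := by
    apply hIR.mono' aestronglyMeasurable_const
    rw [ae_restrict_iff' measurableSet_Ici]
    exact Filter.Eventually.of_forall fun t ht => by
      rw [Real.norm_eq_abs, abs_of_pos hcpos]; exact hlb t ht
  rw [integrableOn_const_iff] at hconst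
  rcases hconst with h|h
  · exact hcpos.ne' (enorm_eq_zero.mp h)
  · rw [Real.volume_Ici] at h; exact absurd h (by simp)

private lemma aux_div1 (a f : ℝ → ℝ) (hac : Continuous a) (hfc : Continuous f)
    (γ β aInf fInf : ℝ) (hγ : 0 < γ) (hβ : 0 < β) (hγβ : γ < β)
    (haInf : 0 < aInf) (hfInf : 0 < fInf)
    (r : ℝ)
    (haR : ∀ t, r ≤ t → a t ≤ 2 * aInf * Real.exp (2*γ*t))
    (hfR : ∀ t, r ≤ t → fInf/2 * Real.exp (2*β*t) ≤ f t) :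
    IntegrableOn (fun t => Real.sqrt (a t) * (1 / Real.sqrt (∫ τ in r..t, f τ))) (Set.Ici r) := by
  set F : ℝ → ℝ := fun t => ∫ τ in r..t, f τ with hF
  have hint : ∀ u v : ℝ, IntervalIntegrable f volume u v := fun u v => hfc.intervalIntegrable u v
  have hfnn : ∀ t, r ≤ t → 0 ≤ f t := fun t ht => le_trans (by positivity) (hfR t ht)
  -- measurability
  have hFcont : Continuous F := intervalIntegral.continuous_primitive hint r
  have hGm : AEStronglyMeasurable (fun t => Real.sqrt (a t) * (1 / Real.sqrt (F t))) volume := by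
    apply Measurable.aestronglyMeasurable
    exact ((Real.continuous_sqrt.comp hac).measurable).mul
      (measurable_const.div (Real.continuous_sqrt.comp hFcont).measurable)
  have hGnn : ∀ t, 0 ≤ Real.sqrt (a t) * (1 / Real.sqrt (F t)) := fun t => by positivity
  -- lower bound for F on [r, ∞): F t ≥ c0 * (t - r) with c0 = fInf/2 * exp (2βr)
  set c0 : ℝ := fInf/2 * Real.exp (2*β*r) with hc0
  have hc0pos : 0 < c0 := by positivity
  have hFlb1 : ∀ t, r ≤ t → c0 * (t - r) ≤ F t := by
    intro t ht
    have := intervalIntegral.integral_mono_on ht (intervalIntegrable_const (c := c0))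
      (hint r t) (fun x hx => le_trans (by
        have : Real.exp (2*β*r) ≤ Real.exp (2*β*x) := Real.exp_le_exp.mpr (by nlinarith [hx.1])
        rw [hc0]; nlinarith) (hfR x hx.1))
    rw [intervalIntegral.integral_const, smul_eq_mul] at this
    linarith [this, mul_comm c0 (t - r)]
  -- lower bound for F on [r+1, ∞): F t ≥ c2 * exp (2βt) with c2 = fInf/2 * exp (-2β)
  set c2 : ℝ := fInf/2 * Real.exp (-(2*β)) with hc2
  have hc2pos : 0 < c2 := by positivity
  have hFlb2 : ∀ t, r + 1 ≤ t → c2 * Real.exp (2*β*t) ≤ F t := by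
    intro t ht
    have h1 : (0:ℝ) ≤ ∫ τ in r..(t-1), f τ :=
      intervalIntegral.integral_nonneg (by linarith) (fun x hx => hfnn x hx.1)
    have hsplit : (∫ τ in r..(t-1), f τ) + (∫ τ in (t-1)..t, f τ) = F t :=
      intervalIntegral.integral_add_adjacent_intervals (hint r (t-1)) (hint (t-1) t)
    have h2 : fInf/2 * Real.exp (2*β*(t-1)) * (t - (t-1)) ≤ ∫ τ in (t-1)..t, f τ := by
      have := intervalIntegral.integral_mono_on (by linarith : t - 1 ≤ t)
        (intervalIntegrable_const (c := fInf/2 * Real.exp (2*β*(t-1))))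
        (hint (t-1) t) (fun x hx => by
          refine le_trans ?_ (hfR x (by linarith [hx.1]))
          have : Real.exp (2*β*(t-1)) ≤ Real.exp (2*β*x) := Real.exp_le_exp.mpr (by nlinarith [hx.1])
          nlinarith)
      rw [intervalIntegral.integral_const, smul_eq_mul] at this
      linarith [this]
    have h3 : c2 * Real.exp (2*β*t) = fInf/2 * Real.exp (2*β*(t-1)) * (t - (t-1)) := by
      rw [hc2, mul_assoc, ← Real.exp_add]
      ring_nf
    linarith [h1, h2, hsplit, h3.le]
  rw [integrableOn_Ici_iff_integrableOn_Ioi]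
  rw [← Set.Ioc_union_Ioi_eq_Ioi (by linarith : r ≤ r + 1)]
  apply IntegrableOn.union
  · -- on Ioc r (r+1): dominated by C1 * (t-r)^(-1/2)
    set A : ℝ := 2 * aInf * Real.exp (2*γ*(r+1)) with hA
    have hApos : 0 < A := by positivity
    set C1 : ℝ := Real.sqrt A / Real.sqrt c0 with hC1
    have hmaj : IntegrableOn (fun t => C1 * (t - r) ^ (-(1/2) : ℝ)) (Set.Ioc r (r+1)) := by
      have base : IntervalIntegrable (fun x : ℝ => x ^ (-(1/2) : ℝ)) volume 0 1 :=
        intervalIntegral.intervalIntegrable_rpow' (by norm_num)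
      have shifted := base.comp_sub_right r
      rw [zero_add, show (1:ℝ) + r = r + 1 from by ring] at shifted
      have := (intervalIntegrable_iff_integrableOn_Ioc_of_le (by linarith : r ≤ r+1)).mp shifted
      exact this.const_mul C1
    apply hmaj.integrable.mono' (hGm.restrict)
    rw [ae_restrict_iff' measurableSet_Ioc]
    refine Filter.Eventually.of_forall fun t ht => ?_
    rw [Real.norm_eq_abs, abs_of_nonneg (hGnn t)]
    have htr : 0 < t - r := by linarith [ht.1]
    have h1 : Real.sqrt (a t) ≤ Real.sqrt A := by
      apply Real.sqrt_le_sqrt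
      refine le_trans (haR t ht.1.le) ?_
      rw [hA]
      have : Real.exp (2*γ*t) ≤ Real.exp (2*γ*(r+1)) := Real.exp_le_exp.mpr (by nlinarith [ht.2])
      nlinarith
    have h2 : 1 / Real.sqrt (F t) ≤ 1 / (Real.sqrt c0 * (t-r) ^ ((1:ℝ)/2)) := by
      apply one_div_le_one_div_of_le
      · positivity
      · rw [show Real.sqrt c0 * (t-r) ^ ((1:ℝ)/2) = Real.sqrt (c0 * (t-r)) from by
          rw [Real.sqrt_mul hc0pos.le, ← Real.sqrt_eq_rpow]]
        exact Real.sqrt_le_sqrt (hFlb1 t ht.1.le)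
    calc Real.sqrt (a t) * (1 / Real.sqrt (F t))
        ≤ Real.sqrt A * (1 / (Real.sqrt c0 * (t-r) ^ ((1:ℝ)/2))) :=
          mul_le_mul h1 h2 (by positivity) (Real.sqrt_nonneg _)
    _ = C1 * (t - r) ^ (-(1/2) : ℝ) := by
        rw [hC1, Real.rpow_neg htr.le, one_div, mul_inv]
        ring
  · -- on Ioi (r+1): dominated by C2 * exp (-(β-γ)t)
    set C2 : ℝ := Real.sqrt (2 * aInf / c2) with hC2
    have hmaj : IntegrableOn (fun t => C2 * Real.exp (-(β-γ)*t)) (Set.Ioi (r+1)) :=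
      (exp_neg_integrableOn_Ioi (r+1) (by linarith : 0 < β - γ)).const_mul C2
    apply hmaj.integrable.mono' (hGm.restrict)
    rw [ae_restrict_iff' measurableSet_Ioi]
    refine Filter.Eventually.of_forall fun t ht => ?_
    rw [Real.norm_eq_abs, abs_of_nonneg (hGnn t)]
    have ht' : r + 1 ≤ t := le_of_lt ht
    have h1 : Real.sqrt (a t) ≤ Real.sqrt (2 * aInf * Real.exp (2*γ*t)) :=
      Real.sqrt_le_sqrt (haR t (by linarith))
    have h2 : 1 / Real.sqrt (F t) ≤ 1 / Real.sqrt (c2 * Real.exp (2*β*t)) := by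
      apply one_div_le_one_div_of_le
      · positivity
      · exact Real.sqrt_le_sqrt (hFlb2 t ht')
    calc Real.sqrt (a t) * (1 / Real.sqrt (F t))
        ≤ Real.sqrt (2 * aInf * Real.exp (2*γ*t)) * (1 / Real.sqrt (c2 * Real.exp (2*β*t))) :=
          mul_le_mul h1 h2 (by positivity) (Real.sqrt_nonneg _)
    _ = C2 * Real.exp (-(β-γ)*t) := by
        rw [one_div, ← Real.sqrt_inv, ← Real.sqrt_mul (by positivity)]
        rw [show 2 * aInf * Real.exp (2*γ*t) * (c2 * Real.exp (2*β*t))⁻¹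
            = 2 * aInf / c2 * (Real.exp (-(β-γ)*t))^2 from by
          have e1 : Real.exp (2*γ*t) * Real.exp (-(2*β*t))
              = Real.exp (-(β-γ)*t) * Real.exp (-(β-γ)*t) := by
            rw [← Real.exp_add, ← Real.exp_add]; ring_nf
          rw [mul_inv, ← Real.exp_neg, sq, div_eq_mul_inv]
          linear_combination (2*aInf*c2⁻¹) * e1]
        rw [Real.sqrt_mul (by positivity), Real.sqrt_sq (Real.exp_pos _).le, ← hC2]

theorem stmt_7 (a f g ginv : ℝ → ℝ) (ha : ContDiff ℝ 1 a) (ν : ℝ) (hν : 0 < ν)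
    (hab : ∀ s, ν ≤ a s) (hf : ContDiff ℝ 1 f)
    (hg : ∀ s, HasDerivAt g (1 / Real.sqrt (a (g s))) s) (hg0 : g 0 = 0)
    (hinv1 : ∀ s, ginv (g s) = s) (hinv2 : ∀ t, g (ginv t) = t)
    (γ β aInf fInf : ℝ) (hγ : 0 < γ) (hβ : 0 < β) (haInf : 0 < aInf) (hfInf : 0 < fInf)
    (haAsym : Tendsto (fun s => a s / Real.exp (2 * γ * s)) atTop (𝓝 aInf))
    (hfAsym : Tendsto (fun s => f s / Real.exp (2 * β * s)) atTop (𝓝 fInf)) :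
    (γ < β → ∃ r : ℝ, 0 < f r ∧ (∀ s, r < s → 0 ≤ f s) ∧
      IntegrableOn (fun s => 1 / Real.sqrt (∫ τ in r..(g s), f τ))
        (Set.Ici (ginv r))) ∧
    (β < γ → ∀ r : ℝ, 0 < f r → (∀ s, r < s → 0 ≤ f s) →
      ¬ IntegrableOn (fun s => 1 / Real.sqrt (∫ τ in r..(g s), f τ))
        (Set.Ici (ginv r))) := by
  constructor
  · intro hγβ
    have h1 : ∀ᶠ s in atTop, fInf/2 < f s / Real.exp (2*β*s) :=
      hfAsym.eventually (eventually_gt_nhds (by linarith))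
    have h2 : ∀ᶠ s in atTop, a s / Real.exp (2*γ*s) < 2*aInf :=
      haAsym.eventually (eventually_lt_nhds (by linarith))
    obtain ⟨R, hR⟩ := Filter.eventually_atTop.mp (h1.and h2)
    have hfR : ∀ t, R ≤ t → fInf/2 * Real.exp (2*β*t) ≤ f t := fun t ht => by
      have h := (lt_div_iff₀ (Real.exp_pos (2*β*t))).mp (hR t ht).1
      linarith
    have haR : ∀ t, R ≤ t → a t ≤ 2 * aInf * Real.exp (2*γ*t) := fun t ht => by
      have h := (div_lt_iff₀ (Real.exp_pos (2*γ*t))).mp (hR t ht).2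
      linarith
    refine ⟨R, lt_of_lt_of_le (by positivity) (hfR R le_rfl), fun s hs =>
      le_trans (by positivity) (hfR s hs.le), ?_⟩
    rw [aux_subst a f g ginv ν hν hab hg hinv1 hinv2 R]
    exact aux_div1 a f ha.continuous hf.continuous γ β aInf fInf hγ hβ hγβ haInf hfInf R haR hfR
  · intro hβγ r hfr hfnn hI
    rw [aux_subst a f g ginv ν hν hab hg hinv1 hinv2 r] at hI
    have h1 : ∀ᶠ s in atTop, aInf/2 < a s / Real.exp (2*γ*s) :=
      haAsym.eventually (eventually_gt_nhds (by linarith))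
    have h2 : ∀ᶠ s in atTop, f s / Real.exp (2*β*s) < 2*fInf :=
      hfAsym.eventually (eventually_lt_nhds (by linarith))
    obtain ⟨R0, hR0⟩ := Filter.eventually_atTop.mp (h1.and h2)
    set R := max R0 (r+1) with hRdef
    have haR : ∀ t, R ≤ t → aInf/2 * Real.exp (2*γ*t) ≤ a t := fun t ht => by
      have h := (lt_div_iff₀ (Real.exp_pos (2*γ*t))).mp (hR0 t (le_trans (le_max_left _ _) ht)).1
      linarith
    have hfRu : ∀ t, R ≤ t → f t ≤ 2 * fInf * Real.exp (2*β*t) := fun t ht => by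
      have h := (div_lt_iff₀ (Real.exp_pos (2*β*t))).mp (hR0 t (le_trans (le_max_left _ _) ht)).2
      linarith
    exact aux_div2 a f hf.continuous γ β aInf fInf hβ hβγ haInf hfInf r hfr hfnn
      (aux_pos f hf.continuous r hfr hfnn) R (le_max_right _ _) haR hfRu hI
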